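/- Suppose S is a biorder and a, b are configurations for S with b = ẽ_i a (in particular ẽ_i a ≠ 0). If φ_j(a) = 0, then ε_j(b) = ε_j(a) + 1 and φ_j(b) = φ_j(a). If φ_j(a) > 0, let t be the i-good element of S for a and s the j-cogood element of S for a; then: (1) if t >_j s, then ε_j(b) = ε_j(a) + 1 and φ_j(b) = φ_j(a); (2) if s ≥_j t, then ε_j(b) = ε_j(a) and φ_j(b) = φ_j(a) − 1, and if in addition ε_j(a) > 0, then the j-good element for b equals the j-good element for a. -/

import Mathlib

/-!  Biorders and configurations (Section 4 of the paper).

A biorder is a finite set `S` with two linear orders `>_i`, `>_j` and a labelling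
`Γ : S → {i, j}` (here modelled by `Bool`, with `true` standing for the label `i` and
`false` for the label `j`), such that `s >_i t` and `t >_j s` force `Γ s = j` and `Γ t = i`.

A configuration is a function `a : S → ℕ` taking values in `{0, 1, 2}`.

All signature-related notions are defined relative to a finite subset `T ⊆ S`
(the biorder restricted to `T`); the notions for the biorder `S` itself are recovered
by taking `T = Finset.univ`. -/

attribute [local instance] Classical.propDecidable

namespace BiorderCrystal

structure Biorder (S : Type) where
  /-- the linear order whose strict relation is `<_i` -/
  li : LinearOrder S
  /-- the linear order whose strict relation is `<_j` -/
  lj : LinearOrder S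
  /-- the labelling `Γ : S → {i, j}`; `true` means label `i`, `false` means label `j` -/
  lab : S → Bool
  /-- if `s >_i t` and `t >_j s` then `Γ s = j` and `Γ t = i` -/
  compat : ∀ s t : S, li.lt t s → lj.lt s t → lab s = false ∧ lab t = true

variable {S : Type}

/-- `s <_i t`. -/
def Biorder.lti (B : Biorder S) (s t : S) : Prop := B.li.lt s t

/-- `s <_j t`. -/
def Biorder.ltj (B : Biorder S) (s t : S) : Prop := B.lj.lt s t

/-- The order used for the `h`-signature: `>_i` if `h = true`, `>_j` if `h = false`. -/
def Biorder.ord (B : Biorder S) (h : Bool) : LinearOrder S := if h then B.li else B.lj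

/-- `s ≫ t`, i.e. `s >_i t` and `s >_j t`. -/
def Biorder.gg (B : Biorder S) (s t : S) : Prop := B.lti t s ∧ B.ltj t s

/-- `s ⋗ t`, i.e. `s >_i t` or `s >_j t`. -/
def Biorder.gd (B : Biorder S) (s t : S) : Prop := B.lti t s ∨ B.ltj t s

/-- `▷`, the transitive closure of `⋗`, computed within the subset `T`. -/
def Biorder.triOn (B : Biorder S) (T : Finset S) : S → S → Prop :=
  Relation.TransGen (fun s t => s ∈ T ∧ t ∈ T ∧ B.gd s t)

/-- The sign `π_h(a, s) ∈ {+1, 0, -1}` contributed by `s` to the `h`-signature of `a`. -/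
def sgn (B : Biorder S) (h : Bool) (a : S → ℕ) (s : S) : ℤ :=
  if (a s = 0 ∧ B.lab s = h) ∨ (a s = 1 ∧ B.lab s ≠ h) then 1
  else if (a s = 1 ∧ B.lab s = h) ∨ (a s = 2 ∧ B.lab s ≠ h) then -1
  else 0

variable [Fintype S]

/-- Minus the partial sum of the `h`-signature of `a` (over `T`) along the positions
up to and including that of `s`: the elements of `T` which are `≥ s` in the order `ord h`. -/
noncomputable def G (B : Biorder S) (h : Bool) (T : Finset S) (a : S → ℕ) (s : S) : ℤ :=
  -(∑ t ∈ T.filter (fun t => (B.ord h).le s t), sgn B h a t)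

/-- The sum of the `h`-signature of `a` (over `T`) from the position of `s` onwards:
the elements of `T` which are `≤ s` in the order `ord h`. -/
noncomputable def H (B : Biorder S) (h : Bool) (T : Finset S) (a : S → ℕ) (s : S) : ℤ :=
  ∑ t ∈ T.filter (fun t => (B.ord h).le t s), sgn B h a t

/-- `ε_h(a)` (over `T`): the maximum of `0` and all the partial sums `G`. -/
noncomputable def epsB (B : Biorder S) (h : Bool) (T : Finset S) (a : S → ℕ) : ℤ :=
  T.fold max 0 (G B h T a)

/-- `φ_h(a)` (over `T`): the maximum of `0` and all the partial sums `H`. -/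
noncomputable def phiB (B : Biorder S) (h : Bool) (T : Finset S) (a : S → ℕ) : ℤ :=
  T.fold max 0 (H B h T a)

/-- The `h`-good element of `T` for `a`:  the element in the good position of the
`h`-signature, i.e. the `ord h`-greatest element achieving `G = ε_h > 0` (or `none`). -/
noncomputable def goodElt (B : Biorder S) (h : Bool) (T : Finset S) (a : S → ℕ) : Option S :=
  if hne : (T.filter fun s => 0 < epsB B h T a ∧ G B h T a s = epsB B h T a).Nonempty
  then some (@Finset.max' S (B.ord h) _ hne)
  else none

/-- The `h`-cogood element of `T` for `a`: the element in the cogood position of the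
`h`-signature, i.e. the `ord h`-least element achieving `H = φ_h > 0` (or `none`). -/
noncomputable def cogoodElt (B : Biorder S) (h : Bool) (T : Finset S) (a : S → ℕ) : Option S :=
  if hne : (T.filter fun s => 0 < phiB B h T a ∧ H B h T a s = phiB B h T a).Nonempty
  then some (@Finset.min' S (B.ord h) _ hne)
  else none

/-- The crystal operator `ẽ_h` (over `T`): decrease `a` by one at the `h`-good element,
or `none` (the ghost element `0`) if there is no good position. -/
noncomputable def et (B : Biorder S) (h : Bool) (T : Finset S) (a : S → ℕ) :
    Option (S → ℕ) :=
  (goodElt B h T a).map fun s => Function.update a s (a s - 1)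

/-- The crystal operator `f̃_h` (over `T`): increase `a` by one at the `h`-cogood element,
or `none` (the ghost element `0`) if there is no cogood position. -/
noncomputable def ft (B : Biorder S) (h : Bool) (T : Finset S) (a : S → ℕ) :
    Option (S → ℕ) :=
  (cogoodElt B h T a).map fun s => Function.update a s (a s + 1)

/-- `a` is a good configuration for the biorder restricted to `T`:
axioms G1, G2, G3 of the paper. -/
def IsGoodOn (B : Biorder S) (T : Finset S) (a : S → ℕ) : Prop :=
  (¬ ∃ s ∈ T, ∃ t ∈ T, B.lti t s ∧ B.ltj s t ∧ a s = 1 ∧ a t = 1) ∧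
  (¬ ∃ s ∈ T, ∃ t ∈ T, B.gd s t ∧ B.triOn T t s ∧ B.lab s = B.lab t ∧ a s < a t) ∧
  (¬ ∃ q ∈ T, ∃ r ∈ T, ∃ s ∈ T, ∃ t ∈ T,
      B.gd q r ∧ B.gg r s ∧ B.gd s t ∧ B.gg r t ∧ B.gd t q ∧ B.gg q s ∧
      a q = 2 ∧ a s = 2 ∧ a r = 0 ∧ a t = 0)

section MainProof
open Finset

set_option linter.unusedSectionVars false
set_option linter.dupNamespace false
set_option linter.unusedVariables false
attribute [-instance] LinearOrder.toDecidableLT LinearOrder.toDecidableLE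


private lemma lnot_le (L : LinearOrder S) {x y : S} : ¬ L.le x y ↔ L.lt y x := by
  letI := L; exact not_le

private lemma lnot_lt (L : LinearOrder S) {x y : S} : ¬ L.lt x y ↔ L.le y x := by
  letI := L; exact not_lt

private lemma lle_trans (L : LinearOrder S) {x y z : S} (h1 : L.le x y) (h2 : L.le y z) :
    L.le x z := by letI := L; exact le_trans h1 h2

private lemma llt_of_lt_of_le (L : LinearOrder S) {x y z : S} (h1 : L.lt x y) (h2 : L.le y z) :
    L.lt x z := by letI := L; exact lt_of_lt_of_le h1 h2

private lemma llt_of_le_of_lt (L : LinearOrder S) {x y z : S} (h1 : L.le x y) (h2 : L.lt y z) :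
    L.lt x z := by letI := L; exact lt_of_le_of_lt h1 h2

private lemma llt_irrefl (L : LinearOrder S) (x : S) : ¬ L.lt x x := by
  letI := L; exact lt_irrefl x

private lemma lle_refl (L : LinearOrder S) (x : S) : L.le x x := by letI := L; exact le_refl x

private lemma lle_antisymm (L : LinearOrder S) {x y : S} (h1 : L.le x y) (h2 : L.le y x) :
    x = y := by letI := L; exact le_antisymm h1 h2

private lemma llt_le (L : LinearOrder S) {x y : S} (h : L.lt x y) : L.le x y := by
  letI := L; exact le_of_lt h

private lemma lle_iff (L : LinearOrder S) {x y : S} : L.le x y ↔ y = x ∨ L.lt x y := by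
  letI := L
  constructor
  · intro h; rcases lt_or_eq_of_le h with h' | h'
    · exact Or.inr h'
    · exact Or.inl h'.symm
  · rintro (rfl | h)
    · exact le_refl _
    · exact le_of_lt h

private lemma univ_max (L : LinearOrder S) (hU : (univ : Finset S).Nonempty) :
    ∃ m : S, ∀ y, L.le y m := by
  letI := L; exact ⟨univ.max' hU, fun y => Finset.le_max' _ y (mem_univ y)⟩

private lemma univ_min (L : LinearOrder S) (hU : (univ : Finset S).Nonempty) :
    ∃ m : S, ∀ y, L.le m y := by
  letI := L; exact ⟨univ.min' hU, fun y => Finset.min'_le _ y (mem_univ y)⟩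

private lemma min'_spec (L : LinearOrder S) (F : Finset S) (h : F.Nonempty) :
    ∃ x0, x0 ∈ F ∧ ∀ y ∈ F, L.le x0 y := by
  letI := L; exact ⟨F.min' h, F.min'_mem h, fun y hy => F.min'_le y hy⟩

private lemma max'_spec (L : LinearOrder S) (F : Finset S) (h : F.Nonempty) :
    ∃ x0, x0 ∈ F ∧ ∀ y ∈ F, L.le y x0 := by
  letI := L; exact ⟨F.max' h, F.max'_mem h, fun y hy => F.le_max' y hy⟩

private lemma exists_succ (L : LinearOrder S) (x : S)
    (hne : (univ.filter (fun y => L.lt x y)).Nonempty) :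
    ∃ u, L.lt x u ∧ (∀ y, L.lt x y ↔ L.le u y) ∧ (∀ y, L.lt y u ↔ L.le y x) := by
  letI := L
  obtain ⟨u, huF, humin⟩ := min'_spec L _ hne
  have hxu : L.lt x u := (mem_filter.1 huF).2
  have hiff : ∀ y, L.lt x y ↔ L.le u y := by
    intro y
    constructor
    · intro h; exact humin y (mem_filter.2 ⟨mem_univ y, h⟩)
    · intro h; exact lt_of_lt_of_le hxu h
  refine ⟨u, hxu, hiff, fun y => ?_⟩
  constructor
  · intro h
    by_contra hc
    exact absurd ((hiff y).1 ((lnot_le L).1 hc)) ((lnot_le L).2 h)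
  · intro h
    by_contra hc
    exact absurd (lt_of_lt_of_le ((hiff y).2 ((lnot_lt L).1 hc)) h) (lt_irrefl x)

private lemma exists_pred (L : LinearOrder S) (x : S)
    (hne : (univ.filter (fun y => L.lt y x)).Nonempty) :
    ∃ p, L.lt p x ∧ (∀ y, L.lt y x ↔ L.le y p) ∧ (∀ y, L.lt p y ↔ L.le x y) := by
  letI := L
  obtain ⟨p, hpF, hpmax⟩ := max'_spec L _ hne
  have hpx : L.lt p x := (mem_filter.1 hpF).2
  have hiff : ∀ y, L.lt y x ↔ L.le y p := by
    intro y
    constructor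
    · intro h; exact hpmax y (mem_filter.2 ⟨mem_univ y, h⟩)
    · intro h; exact lt_of_le_of_lt h hpx
  refine ⟨p, hpx, hiff, fun y => ?_⟩
  constructor
  · intro h
    by_contra hc
    exact absurd ((hiff y).1 ((lnot_le L).1 hc)) ((lnot_le L).2 h)
  · intro h
    by_contra hc
    exact absurd (lt_of_le_of_lt h ((hiff y).2 ((lnot_lt L).1 hc))) (lt_irrefl x)


private lemma filter_congr' (L : LinearOrder S) (p q : S → Prop)
    [DecidablePred p] [DecidablePred q] (h : ∀ y, p y ↔ q y) :
    univ.filter p = univ.filter q := by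
  apply Finset.filter_congr
  intro y _
  simp [h y]

private lemma sum_split_le (L : LinearOrder S) (f : S → ℤ) (x : S) :
    (∑ y ∈ univ.filter (fun y => L.le y x), f y)
      + (∑ y ∈ univ.filter (fun y => L.lt x y), f y) = ∑ y, f y := by
  have h1 : univ.filter (fun y => L.lt x y) = univ.filter (fun y => ¬ L.le y x) :=
    filter_congr' L _ _ (fun y => (lnot_le L).symm)
  rw [h1, Finset.sum_filter_add_sum_filter_not]

private lemma sum_ge_eq (L : LinearOrder S) (f : S → ℤ) (x : S) :
    (∑ y ∈ univ.filter (fun y => L.le x y), f y)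
      = f x + ∑ y ∈ univ.filter (fun y => L.lt x y), f y := by
  have h1 : univ.filter (fun y => L.le x y) = insert x (univ.filter (fun y => L.lt x y)) := by
    ext y
    simp only [Finset.mem_filter, Finset.mem_insert, Finset.mem_univ, true_and]
    constructor
    · intro h; rcases (lle_iff L).1 h with h' | h'
      · exact Or.inl h'
      · exact Or.inr h'
    · rintro (rfl | h)
      · exact lle_refl L y
      · exact llt_le L h
  rw [h1, Finset.sum_insert (by simp only [Finset.mem_filter]; exact fun hc => llt_irrefl L x hc.2)]

private lemma sum_le_eq (L : LinearOrder S) (f : S → ℤ) (x : S) :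
    (∑ y ∈ univ.filter (fun y => L.le y x), f y)
      = f x + ∑ y ∈ univ.filter (fun y => L.lt y x), f y := by
  have h1 : univ.filter (fun y => L.le y x) = insert x (univ.filter (fun y => L.lt y x)) := by
    ext y
    simp only [Finset.mem_filter, Finset.mem_insert, Finset.mem_univ, true_and]
    constructor
    · intro h; rcases (lle_iff L).1 h with h' | h'
      · exact Or.inl h'.symm
      · exact Or.inr h'
    · rintro (rfl | h)
      · exact lle_refl L y
      · exact llt_le L h
  rw [h1, Finset.sum_insert (by simp only [Finset.mem_filter]; exact fun hc => llt_irrefl L x hc.2)]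


/-! ### Lemmas about `sgn`, `G`, `H`, `epsB`, `phiB` -/

private lemma sgn_cases (B : Biorder S) (h : Bool) (c : S → ℕ) (x : S) :
    sgn B h c x = -1 ∨ sgn B h c x = 0 ∨ sgn B h c x = 1 := by
  unfold sgn; split_ifs <;> simp

private lemma le_epsB (B : Biorder S) (h : Bool) (c : S → ℕ) (x : S) :
    G B h univ c x ≤ epsB B h univ c := by
  unfold epsB
  exact (Finset.le_fold_max _).2 (Or.inr ⟨x, mem_univ x, le_refl _⟩)

private lemma epsB_nonneg (B : Biorder S) (h : Bool) (c : S → ℕ) :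
    0 ≤ epsB B h univ c := by
  unfold epsB
  exact (Finset.le_fold_max _).2 (Or.inl le_rfl)

private lemma epsB_le (B : Biorder S) (h : Bool) (c : S → ℕ) {z : ℤ} (h0 : 0 ≤ z)
    (hall : ∀ x, G B h univ c x ≤ z) : epsB B h univ c ≤ z := by
  unfold epsB
  exact (Finset.fold_max_le _).2 ⟨h0, fun x _ => hall x⟩

private lemma le_phiB (B : Biorder S) (h : Bool) (c : S → ℕ) (x : S) :
    H B h univ c x ≤ phiB B h univ c := by
  unfold phiB
  exact (Finset.le_fold_max _).2 (Or.inr ⟨x, mem_univ x, le_refl _⟩)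

private lemma phiB_nonneg (B : Biorder S) (h : Bool) (c : S → ℕ) :
    0 ≤ phiB B h univ c := by
  unfold phiB
  exact (Finset.le_fold_max _).2 (Or.inl le_rfl)

private lemma phiB_le (B : Biorder S) (h : Bool) (c : S → ℕ) {z : ℤ} (h0 : 0 ≤ z)
    (hall : ∀ x, H B h univ c x ≤ z) : phiB B h univ c ≤ z := by
  unfold phiB
  exact (Finset.fold_max_le _).2 ⟨h0, fun x _ => hall x⟩

private lemma epsB_achieved (B : Biorder S) (h : Bool) (c : S → ℕ) (x0 : S)
    (hx0 : ∀ y, G B h univ c y ≤ G B h univ c x0) :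
    epsB B h univ c = max 0 (G B h univ c x0) := by
  apply le_antisymm
  · exact epsB_le B h c (le_max_left _ _) (fun y => le_trans (hx0 y) (le_max_right _ _))
  · exact max_le (epsB_nonneg B h c) (le_epsB B h c x0)

/-- `H = G + sgn + total`. -/
private lemma H_eq_G (B : Biorder S) (h : Bool) (c : S → ℕ) (x : S) :
    H B h univ c x = G B h univ c x + sgn B h c x + ∑ y, sgn B h c y := by
  have h1 := sum_split_le (B.ord h) (sgn B h c) x
  have h2 := sum_ge_eq (B.ord h) (sgn B h c) x
  unfold H G
  linarith

/-- `G x = (sum over y < x) - total`. -/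
private lemma G_below (B : Biorder S) (h : Bool) (c : S → ℕ) (x : S) :
    G B h univ c x
      = (∑ y ∈ univ.filter (fun y => (B.ord h).lt y x), sgn B h c y) - ∑ y, sgn B h c y := by
  have h1 := sum_split_le (B.ord h) (sgn B h c) x
  have h2 := sum_ge_eq (B.ord h) (sgn B h c) x
  have h3 := sum_le_eq (B.ord h) (sgn B h c) x
  unfold G
  linarith

private lemma H_top (B : Biorder S) (h : Bool) (c : S → ℕ) (xm : S)
    (hxm : ∀ y, (B.ord h).le y xm) : H B h univ c xm = ∑ y, sgn B h c y := by
  unfold H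
  rw [Finset.filter_true_of_mem (fun y _ => hxm y)]

private lemma G_bot (B : Biorder S) (h : Bool) (c : S → ℕ) (m : S)
    (hm : ∀ y, (B.ord h).le m y) : G B h univ c m = -∑ y, sgn B h c y := by
  unfold G
  rw [Finset.filter_true_of_mem (fun y _ => hm y)]

/-- Lemma "P": every partial sum `G` is at most `phi - total`. -/
private lemma G_le_phi_sub (B : Biorder S) (h : Bool) (c : S → ℕ) (x : S) :
    G B h univ c x + (∑ y, sgn B h c y) ≤ phiB B h univ c := by
  have hG := G_below B h c x
  by_cases hne : (univ.filter (fun y => (B.ord h).lt y x)).Nonempty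
  · obtain ⟨p, hpx, hpiff, -⟩ := exists_pred (B.ord h) x hne
    have hfe : univ.filter (fun y => (B.ord h).lt y x)
        = univ.filter (fun y => (B.ord h).le y p) := filter_congr' (B.ord h) _ _ hpiff
    have : (∑ y ∈ univ.filter (fun y => (B.ord h).lt y x), sgn B h c y) = H B h univ c p := by
      rw [hfe]; rfl
    have hp := le_phiB B h c p
    linarith
  · rw [Finset.not_nonempty_iff_eq_empty] at hne
    rw [hne, Finset.sum_empty] at hG
    have := phiB_nonneg B h c
    linarith

/-- Lemma "Q": every partial sum `H` is at most `eps + total`. -/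
private lemma H_le_eps_add (B : Biorder S) (h : Bool) (c : S → ℕ) (x : S) :
    H B h univ c x ≤ epsB B h univ c + ∑ y, sgn B h c y := by
  have h1 := sum_split_le (B.ord h) (sgn B h c) x
  by_cases hne : (univ.filter (fun y => (B.ord h).lt x y)).Nonempty
  · obtain ⟨u, hxu, huiff, -⟩ := exists_succ (B.ord h) x hne
    have hfe : univ.filter (fun y => (B.ord h).lt x y)
        = univ.filter (fun y => (B.ord h).le u y) := filter_congr' (B.ord h) _ _ huiff
    have hGu : G B h univ c u = -∑ y ∈ univ.filter (fun y => (B.ord h).lt x y), sgn B h c y := by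
      unfold G; rw [hfe]
    have hu := le_epsB B h c u
    unfold H
    linarith
  · rw [Finset.not_nonempty_iff_eq_empty] at hne
    rw [hne, Finset.sum_empty] at h1
    have := epsB_nonneg B h c
    unfold H
    linarith

/-! ### The effect of decrementing at the good element -/

private lemma lab_false_of_ne_true {b : Bool} (h : ¬ (b = true)) : b = false := by
  cases b <;> simp_all

private lemma sgn_update (B : Biorder S) (a : S → ℕ) (t0 : S)
    (ht : sgn B true a t0 = -1) (y : S) :
    sgn B false (Function.update a t0 (a t0 - 1)) y
      = sgn B false a y - (if y = t0 then 1 else 0) := by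
  by_cases hy : y = t0
  · subst hy
    rw [if_pos rfl]
    have hcase : (a y = 1 ∧ B.lab y = true) ∨ (a y = 2 ∧ B.lab y = false) := by
      unfold sgn at ht
      split_ifs at ht with h1 h2
      all_goals try (exfalso; revert ht; norm_num; done)
      rcases h2 with h2 | h2
      · exact Or.inl h2
      · exact Or.inr ⟨h2.1, lab_false_of_ne_true h2.2⟩
    rcases hcase with ⟨ha1, hlab⟩ | ⟨ha2, hlab⟩
    · have hupd : Function.update a y (a y - 1) y = 0 := by
        rw [Function.update_self, ha1]
      unfold sgn
      rw [hupd, ha1, hlab]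
      norm_num
    · have hupd : Function.update a y (a y - 1) y = 1 := by
        rw [Function.update_self, ha2]
      unfold sgn
      rw [hupd, ha2, hlab]
      norm_num
  · rw [if_neg hy]
    have hupd : Function.update a t0 (a t0 - 1) y = a y := Function.update_of_ne hy _ _
    unfold sgn
    rw [hupd]
    ring

private lemma total_update (B : Biorder S) (a b : S → ℕ) (t0 : S)
    (hd : ∀ y, sgn B false b y = sgn B false a y - (if y = t0 then 1 else 0)) :
    (∑ y, sgn B false b y) = (∑ y, sgn B false a y) - 1 := by
  rw [Finset.sum_congr rfl (fun y _ => hd y), Finset.sum_sub_distrib]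
  congr 1
  rw [Finset.sum_ite_eq' univ t0 (fun _ => (1 : ℤ))]
  simp

private lemma H_update (B : Biorder S) (a b : S → ℕ) (t0 : S)
    (hd : ∀ y, sgn B false b y = sgn B false a y - (if y = t0 then 1 else 0)) (x : S) :
    H B false univ b x
      = H B false univ a x - (if (B.ord false).le t0 x then 1 else 0) := by
  unfold H
  rw [Finset.sum_congr rfl (fun y _ => hd y), Finset.sum_sub_distrib]
  congr 1
  rw [Finset.sum_ite_eq' _ t0 (fun _ => (1 : ℤ))]
  simp only [Finset.mem_filter, Finset.mem_univ, true_and]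

private lemma G_update (B : Biorder S) (a b : S → ℕ) (t0 : S)
    (hd : ∀ y, sgn B false b y = sgn B false a y - (if y = t0 then 1 else 0)) (x : S) :
    G B false univ b x
      = G B false univ a x + (if (B.ord false).le x t0 then 1 else 0) := by
  unfold G
  rw [Finset.sum_congr rfl (fun y _ => hd y), Finset.sum_sub_distrib]
  rw [Finset.sum_ite_eq' _ t0 (fun _ => (1 : ℤ))]
  simp only [Finset.mem_filter, Finset.mem_univ, true_and]
  ring

/-! ### Characterisation of good and cogood elements -/

private lemma max'_mem_le (L : LinearOrder S) (F : Finset S) (h : F.Nonempty) :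
    @Finset.max' S L F h ∈ F ∧ ∀ y ∈ F, L.le y (@Finset.max' S L F h) := by
  letI := L; exact ⟨F.max'_mem h, fun y hy => F.le_max' y hy⟩

private lemma min'_mem_le (L : LinearOrder S) (F : Finset S) (h : F.Nonempty) :
    @Finset.min' S L F h ∈ F ∧ ∀ y ∈ F, L.le (@Finset.min' S L F h) y := by
  letI := L; exact ⟨F.min'_mem h, fun y hy => F.min'_le y hy⟩

private lemma goodElt_spec (B : Biorder S) (h : Bool) (c : S → ℕ) (t0 : S)
    (hg : goodElt B h univ c = some t0) :
    0 < epsB B h univ c ∧ G B h univ c t0 = epsB B h univ c ∧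
      (∀ y, G B h univ c y = epsB B h univ c → (B.ord h).le y t0) ∧
      sgn B h c t0 = -1 := by
  unfold goodElt at hg
  split_ifs at hg with hne
  injection hg with hg
  obtain ⟨hmem, hmax⟩ := max'_mem_le (B.ord h) _ hne
  rw [hg] at hmem hmax
  obtain ⟨-, hpos, hGt0⟩ := Finset.mem_filter.1 hmem
  have hmax' : ∀ y, G B h univ c y = epsB B h univ c → (B.ord h).le y t0 := fun y hy =>
    hmax y (Finset.mem_filter.2 ⟨Finset.mem_univ y, hpos, hy⟩)
  refine ⟨hpos, hGt0, hmax', ?_⟩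
  by_cases hup : (univ.filter (fun y => (B.ord h).lt t0 y)).Nonempty
  · obtain ⟨u, htu, huiff, -⟩ := exists_succ (B.ord h) t0 hup
    have hfe : univ.filter (fun y => (B.ord h).le u y)
        = univ.filter (fun y => (B.ord h).lt t0 y) :=
      filter_congr' (B.ord h) _ _ (fun y => (huiff y).symm)
    have hGu : G B h univ c u = G B h univ c t0 + sgn B h c t0 := by
      have h2 := sum_ge_eq (B.ord h) (sgn B h c) t0
      unfold G
      rw [hfe]
      linarith
    have hule := le_epsB B h c u
    rcases sgn_cases B h c t0 with hs | hs | hs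
    · exact hs
    · exfalso
      have : G B h univ c u = epsB B h univ c := by rw [hGu, hs, add_zero, hGt0]
      exact llt_irrefl (B.ord h) t0 (llt_of_lt_of_le (B.ord h) htu (hmax' u this))
    · exfalso
      rw [hGu, hs, hGt0] at hule
      linarith
  · rw [Finset.not_nonempty_iff_eq_empty] at hup
    have hGt0' : G B h univ c t0 = -sgn B h c t0 := by
      have h2 := sum_ge_eq (B.ord h) (sgn B h c) t0
      unfold G
      rw [hup, Finset.sum_empty] at h2
      rw [h2]
      ring
    rcases sgn_cases B h c t0 with hs | hs | hs
    · exact hs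
    · exfalso; rw [hGt0', hs] at hGt0; rw [← hGt0] at hpos; norm_num at hpos
    · exfalso; rw [hGt0', hs] at hGt0; rw [← hGt0] at hpos; norm_num at hpos

private lemma cogoodElt_spec (B : Biorder S) (h : Bool) (c : S → ℕ) (s0 : S)
    (hg : cogoodElt B h univ c = some s0) :
    0 < phiB B h univ c ∧ H B h univ c s0 = phiB B h univ c ∧
      (∀ y, H B h univ c y = phiB B h univ c → (B.ord h).le s0 y) := by
  unfold cogoodElt at hg
  split_ifs at hg with hne
  injection hg with hg
  obtain ⟨hmem, hmin⟩ := min'_mem_le (B.ord h) _ hne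
  rw [hg] at hmem hmin
  obtain ⟨-, hpos, hHs0⟩ := Finset.mem_filter.1 hmem
  exact ⟨hpos, hHs0, fun y hy =>
    hmin y (Finset.mem_filter.2 ⟨Finset.mem_univ y, hpos, hy⟩)⟩

private lemma goodElt_eq (B : Biorder S) (h : Bool) (c : S → ℕ) (x0 : S)
    (hpos : 0 < epsB B h univ c) (hG : G B h univ c x0 = epsB B h univ c)
    (hmax : ∀ y, G B h univ c y = epsB B h univ c → (B.ord h).le y x0) :
    goodElt B h univ c = some x0 := by
  have hne : (univ.filter (fun x => 0 < epsB B h univ c ∧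
      G B h univ c x = epsB B h univ c)).Nonempty :=
    ⟨x0, Finset.mem_filter.2 ⟨Finset.mem_univ _, hpos, hG⟩⟩
  unfold goodElt
  rw [dif_pos hne]
  congr 1
  obtain ⟨hmem, hmax'⟩ := max'_mem_le (B.ord h) _ hne
  refine lle_antisymm (B.ord h) ?_ ?_
  · exact hmax _ (Finset.mem_filter.1 hmem).2.2
  · exact hmax' x0 (Finset.mem_filter.2 ⟨Finset.mem_univ _, hpos, hG⟩)

private lemma ltj_ord (B : Biorder S) (s t : S) : B.ltj s t ↔ (B.ord false).lt s t := Iff.rfl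


/-- Lemma 4.9 of the paper (here `true` plays the role of the label `i` and `false` that
of the label `j`): how `ε_j` and `φ_j` change when `ẽ_i` is applied. -/
theorem eps_phi_change_under_etilde (S : Type) [Fintype S] (B : Biorder S)
    (a b : S → ℕ) (ha : ∀ s, a s ≤ 2)
    (hb : et B true Finset.univ a = some b) :
    (phiB B false Finset.univ a = 0 →
      epsB B false Finset.univ b = epsB B false Finset.univ a + 1 ∧
      phiB B false Finset.univ b = phiB B false Finset.univ a) ∧
    (0 < phiB B false Finset.univ a →
      ∀ t s : S, goodElt B true Finset.univ a = some t →
        cogoodElt B false Finset.univ a = some s →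
        (B.ltj s t →
          epsB B false Finset.univ b = epsB B false Finset.univ a + 1 ∧
          phiB B false Finset.univ b = phiB B false Finset.univ a) ∧
        ((B.ord false).le t s →
          epsB B false Finset.univ b = epsB B false Finset.univ a ∧
          phiB B false Finset.univ b = phiB B false Finset.univ a - 1 ∧
          (0 < epsB B false Finset.univ a →
            goodElt B false Finset.univ b = goodElt B false Finset.univ a))) := by
  -- extract the good element t0 and the description of b
  unfold et at hb
  rw [Option.map_eq_some_iff] at hb
  obtain ⟨t0, hg0, hbdef⟩ := hb
  obtain ⟨-, -, -, hsgni⟩ := goodElt_spec B true a t0 hg0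
  have hd : ∀ y, sgn B false b y = sgn B false a y - (if y = t0 then 1 else 0) := by
    intro y; rw [← hbdef]; exact sgn_update B a t0 hsgni y
  have hU : (univ : Finset S).Nonempty := ⟨t0, mem_univ t0⟩
  set J := B.ord false with hJ
  -- abbreviations
  set tot := ∑ y, sgn B false a y with htot
  set ε := epsB B false univ a with hε
  set φ := phiB B false univ a with hφ
  have hHb : ∀ x, H B false univ b x = H B false univ a x - (if J.le t0 x then 1 else 0) :=
    H_update B a b t0 hd
  have hGb : ∀ x, G B false univ b x = G B false univ a x + (if J.le x t0 then 1 else 0) :=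
    G_update B a b t0 hd
  have hSph : tot ≤ φ := by
    obtain ⟨xm, hxm⟩ := univ_max J hU
    have := le_phiB B false a xm
    rw [H_top B false a xm hxm] at this
    exact this
  constructor
  · -- Case 1 : φ = 0
    intro hφ0
    have hφb : phiB B false univ b = 0 := by
      apply le_antisymm
      · apply phiB_le B false b le_rfl
        intro x
        have h1 := le_phiB B false a x
        rw [← hφ, hφ0] at h1
        rw [hHb x]
        split_ifs <;> linarith
      · exact phiB_nonneg B false b
    refine ⟨?_, by rw [hφb, hφ0]⟩
    have htot0 : tot ≤ 0 := by rw [hφ0] at hSph; exact hSph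
    obtain ⟨m, hm⟩ := univ_min J hU
    have hGm : G B false univ a m = -tot := G_bot B false a m hm
    obtain ⟨xs, -, hxs⟩ := Finset.exists_max_image univ (G B false univ a) hU
    have hxs' : ∀ y, G B false univ a y ≤ G B false univ a xs := fun y => hxs y (mem_univ y)
    have hGge : -tot ≤ G B false univ a xs := hGm ▸ hxs' m
    have hGpos : 0 ≤ G B false univ a xs := by linarith
    have hεeq : ε = G B false univ a xs := by
      rw [hε, epsB_achieved B false a xs hxs']
      exact max_eq_right hGpos
    -- find an achiever x0 ≤_j t0
    have hAne : (univ.filter (fun x => G B false univ a x = G B false univ a xs)).Nonempty :=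
      ⟨xs, Finset.mem_filter.2 ⟨mem_univ _, rfl⟩⟩
    obtain ⟨x0, hx0A, hx0min⟩ := min'_spec J _ hAne
    have hx0G : G B false univ a x0 = G B false univ a xs := (Finset.mem_filter.1 hx0A).2
    have hx0le : J.le x0 t0 := by
      by_contra hcon
      have hlt : J.lt t0 x0 := (lnot_le J).1 hcon
      have hne : (univ.filter (fun y => J.lt y x0)).Nonempty :=
        ⟨t0, Finset.mem_filter.2 ⟨mem_univ _, hlt⟩⟩
      obtain ⟨p, hpx0, hpiff, -⟩ := exists_pred J x0 hne
      have hstep : G B false univ a x0 = G B false univ a p + sgn B false a p := by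
        have e1 := G_below B false a x0
        have e2 := G_below B false a p
        have e3 : (∑ y ∈ univ.filter (fun y => J.lt y x0), sgn B false a y)
            = ∑ y ∈ univ.filter (fun y => J.le y p), sgn B false a y := by
          rw [filter_congr' J _ _ hpiff]
        have e4 := sum_le_eq J (sgn B false a) p
        rw [← hJ] at e1 e2
        rw [← htot] at e1 e2
        linarith
      rcases sgn_cases B false a p with hs | hs | hs
      · have := hxs' p; rw [hx0G] at hstep; linarith
      · have hpA : p ∈ univ.filter (fun x => G B false univ a x = G B false univ a xs) :=
          Finset.mem_filter.2 ⟨mem_univ _, by rw [← hx0G, hstep, hs, add_zero]⟩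
        exact llt_irrefl J p (llt_of_lt_of_le J hpx0 (hx0min p hpA))
      · have hHp := H_eq_G B false a p
        rw [← htot] at hHp
        have hHple : H B false univ a p ≤ 0 := by
          have := le_phiB B false a p; rw [← hφ, hφ0] at this; exact this
        have hGxs : G B false univ a xs = -tot := by
          rw [hx0G] at hstep; linarith
        have hmA : m ∈ univ.filter (fun x => G B false univ a x = G B false univ a xs) :=
          Finset.mem_filter.2 ⟨mem_univ _, by rw [hGm, hGxs]⟩
        have h1 := hx0min m hmA
        have h2 := hm x0
        have hx0m : x0 = m := lle_antisymm J h1 h2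
        exact hcon (hx0m ▸ hm t0)
    -- conclude
    apply le_antisymm
    · apply epsB_le B false b (by have := epsB_nonneg B false a; rw [← hε] at this; linarith)
      intro x
      rw [hGb x]
      have := le_epsB B false a x
      rw [← hε] at this
      split_ifs <;> linarith
    · have hx0b : G B false univ b x0 = ε + 1 := by
        rw [hGb x0, if_pos hx0le, hx0G, ← hεeq]
      calc ε + 1 = G B false univ b x0 := hx0b.symm
        _ ≤ _ := le_epsB B false b x0
  · -- Case 2 : φ > 0
    intro hφpos t s ht hs
    rw [hg0] at ht
    injection ht with ht
    subst ht
    obtain ⟨-, hHs, hsmin⟩ := cogoodElt_spec B false a s hs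
    rw [← hφ] at hHs
    constructor
    · -- t0 >_j s
      intro hst
      have hst' : J.lt s t0 := (ltj_ord B s t0).1 hst
      have hne : (univ.filter (fun y => J.lt s y)).Nonempty :=
        ⟨t0, Finset.mem_filter.2 ⟨mem_univ _, hst'⟩⟩
      obtain ⟨u, hsu, huiff, huiff2⟩ := exists_succ J s hne
      have hut0 : J.le u t0 := (huiff t0).1 hst'
      have hGu : G B false univ a u = φ - tot := by
        have e1 := G_below B false a u
        rw [← hJ, ← htot] at e1
        have e2 : (∑ y ∈ univ.filter (fun y => J.lt y u), sgn B false a y)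
            = ∑ y ∈ univ.filter (fun y => J.le y s), sgn B false a y := by
          rw [filter_congr' J _ _ huiff2]
        have e3 : (∑ y ∈ univ.filter (fun y => J.le y s), sgn B false a y)
            = H B false univ a s := rfl
        rw [e1, e2, e3, hHs]
      have hGle : ∀ x, G B false univ a x ≤ φ - tot := by
        intro x
        have := G_le_phi_sub B false a x
        rw [← htot, ← hφ] at this
        linarith
      have hεa : ε = φ - tot := by
        apply le_antisymm
        · rw [hε]; exact epsB_le B false a (by linarith) hGle
        · rw [← hGu, hε]; exact le_epsB B false a u
      constructor
      · -- ε part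
        apply le_antisymm
        · apply epsB_le B false b (by have := epsB_nonneg B false a; rw [← hε] at this; linarith)
          intro x
          rw [hGb x]
          have := hGle x
          split_ifs <;> rw [hεa] <;> linarith
        · have : G B false univ b u = ε + 1 := by
            rw [hGb u, if_pos hut0, hGu, hεa]
          calc ε + 1 = G B false univ b u := this.symm
            _ ≤ _ := le_epsB B false b u
      · -- φ part
        apply le_antisymm
        · apply phiB_le B false b (by linarith)
          intro x
          have := le_phiB B false a x
          rw [← hφ] at this
          rw [hHb x]
          split_ifs <;> linarith
        · have hnle : ¬ J.le t0 s := (lnot_le J).2 hst'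
          have : H B false univ b s = φ := by rw [hHb s, if_neg hnle, hHs]; ring
          calc φ = H B false univ b s := this.symm
            _ ≤ _ := le_phiB B false b s
    · -- s ≥_j t0
      intro hts
      have hbelow : ∀ x, J.lt x s → H B false univ a x ≤ φ - 1 := by
        intro x hx
        have h1 := le_phiB B false a x
        rw [← hφ] at h1
        have h2 : H B false univ a x ≠ φ := by
          intro he
          exact llt_irrefl J x (llt_of_lt_of_le J hx (hsmin x (by rw [he, hφ])))
        have := lt_of_le_of_ne h1 h2
        linarith [Int.lt_iff_add_one_le.1 this]
      have hφ1 : (1 : ℤ) ≤ φ := hφpos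
      have hφb : phiB B false univ b = φ - 1 := by
        apply le_antisymm
        · apply phiB_le B false b (by linarith)
          intro x
          rw [hHb x]
          split_ifs with hc
          · have := le_phiB B false a x; rw [← hφ] at this; linarith
          · have hxlt : J.lt x s := llt_of_lt_of_le J ((lnot_le J).1 hc) hts
            have := hbelow x hxlt
            linarith
        · have : H B false univ b s = φ - 1 := by rw [hHb s, if_pos hts, hHs]
          calc φ - 1 = H B false univ b s := this.symm
            _ ≤ _ := le_phiB B false b s
      have hQ : φ ≤ ε + tot := by
        have := H_le_eps_add B false a s
        rw [← htot, ← hε, hHs] at this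
        exact this
      have hκ : ∀ x, J.le x t0 → G B false univ a x ≤ ε - 1 := by
        intro x hx
        have e1 := G_below B false a x
        rw [← hJ, ← htot] at e1
        by_cases hne : (univ.filter (fun y => J.lt y x)).Nonempty
        · obtain ⟨p, hpx, hpiff, -⟩ := exists_pred J x hne
          have e3 : (∑ y ∈ univ.filter (fun y => J.lt y x), sgn B false a y)
              = H B false univ a p := by
            rw [filter_congr' J _ _ hpiff]; rfl
          have hps : J.lt p s := llt_of_lt_of_le J hpx (lle_trans J hx hts)
          have := hbelow p hps
          rw [e1, e3]
          linarith
        · rw [Finset.not_nonempty_iff_eq_empty] at hne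
          rw [hne, Finset.sum_empty] at e1
          rw [e1]
          linarith
      have hεb : epsB B false univ b = ε := by
        apply le_antisymm
        · apply epsB_le B false b (by have := epsB_nonneg B false a; rw [← hε] at this; linarith)
          intro x
          rw [hGb x]
          split_ifs with hc
          · have := hκ x hc; linarith
          · have := le_epsB B false a x; rw [← hε] at this; linarith
        · rcases lt_or_eq_of_le (epsB_nonneg B false a) with hεpos | hε0
          · rw [← hε] at hεpos
            obtain ⟨xs, -, hxs⟩ := Finset.exists_max_image univ (G B false univ a) hU
            have hxs' : ∀ y, G B false univ a y ≤ G B false univ a xs := fun y => hxs y (mem_univ y)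
            have hach : ε = max 0 (G B false univ a xs) := by
              rw [hε]; exact epsB_achieved B false a xs hxs'
            have hGxs : G B false univ a xs = ε := by
              rcases max_choice 0 (G B false univ a xs) with h' | h'
              · rw [h'] at hach; exact absurd hach.symm (by intro hc; rw [hc] at hεpos; exact lt_irrefl _ hεpos)
              · rw [h'] at hach; exact hach.symm
            have hnle : ¬ J.le xs t0 := by
              intro hcon
              have := hκ xs hcon
              rw [hGxs] at this
              linarith
            have : G B false univ b xs = ε := by rw [hGb xs, if_neg hnle, hGxs]; ring
            calc ε = G B false univ b xs := this.symm
              _ ≤ _ := le_epsB B false b xs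
          · have hz : ε = 0 := by rw [hε, ← hε0]
            rw [hz]
            exact epsB_nonneg B false b
      refine ⟨hεb, hφb, ?_⟩
      intro hεpos
      -- the good elements coincide
      have hεb' : 0 < epsB B false univ b := by rw [hεb]; exact hεpos
      obtain ⟨xs, -, hxs⟩ := Finset.exists_max_image univ (G B false univ a) hU
      have hxs' : ∀ y, G B false univ a y ≤ G B false univ a xs := fun y => hxs y (mem_univ y)
      have hach : ε = max 0 (G B false univ a xs) := by
        rw [hε]; exact epsB_achieved B false a xs hxs'
      have hGxs : G B false univ a xs = ε := by
        rcases max_choice 0 (G B false univ a xs) with h' | h'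
        · rw [h'] at hach
          exact absurd hach.symm (by intro hc; rw [hc] at hεpos; exact lt_irrefl _ hεpos)
        · rw [h'] at hach; exact hach.symm
      -- x1 : the j-greatest achiever for a
      have hFne : (univ.filter (fun x => G B false univ a x = ε)).Nonempty :=
        ⟨xs, Finset.mem_filter.2 ⟨mem_univ _, hGxs⟩⟩
      obtain ⟨x1, hx1F, hx1max⟩ := max'_spec J _ hFne
      have hGx1 : G B false univ a x1 = ε := (Finset.mem_filter.1 hx1F).2
      have hx1nle : ¬ J.le x1 t0 := by
        intro hcon
        have := hκ x1 hcon
        rw [hGx1] at this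
        linarith
      have hga : goodElt B false univ a = some x1 := by
        apply goodElt_eq B false a x1 hεpos (by rw [← hε]; exact hGx1)
        intro y hy
        rw [← hε] at hy
        exact hx1max y (Finset.mem_filter.2 ⟨mem_univ _, hy⟩)
      have hgb : goodElt B false univ b = some x1 := by
        apply goodElt_eq B false b x1 hεb'
        · rw [hεb, hGb x1, if_neg hx1nle, hGx1]; ring
        · intro y hy
          rw [hεb] at hy
          rw [hGb y] at hy
          by_cases hc : J.le y t0
          · have hlt : J.lt t0 x1 := (lnot_le J).1 hx1nle
            exact lle_trans J hc (llt_le J hlt)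
          · rw [if_neg hc, add_zero] at hy
            exact hx1max y (Finset.mem_filter.2 ⟨mem_univ _, hy⟩)
      rw [hga, hgb]

end MainProof

end BiorderCrystal
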